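/- Let (S₁, σ, S₀) be a constellation. Define the constellation order ≤^co on the disjoint union S₁ ⊔ S₀ (writing s₁° for elements of S₁ and s₀• for elements of S₀) by: s₁° ≤^co t₁° iff s₁ ≤ t₁ in S₁; s₀• ≤^co s₁° iff s₀ ∈ σ(s₁); s₀• ≤^co t₀• iff s₀ = t₀; and never s₁° ≤^co s₀•. Then (S₁ ⊔ S₀, ≤^co) is a tree, with the elements of S₀ being exactly its leaves. -/

import Mathlib

/-- A convex subtree: a subset with a largest element that is order-convex. -/
def ConvexSubtree {α : Type*} [PartialOrder α] (X : Set α) : Prop :=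
  (∃ m ∈ X, ∀ x ∈ X, x ≤ m) ∧ ∀ x ∈ X, ∀ x' ∈ X, ∀ s : α, x < s → s < x' → s ∈ X

/-- The constellation order on `S₁ ⊔ S₀` (`inl` = elements of `S₁` as inner nodes/circles,
`inr` = elements of `S₀` as vertices). -/
def coOrd {α β : Type*} [PartialOrder α] (σ : α → Set β) : α ⊕ β → α ⊕ β → Prop
  | Sum.inl s, Sum.inl t => s ≤ t
  | Sum.inr s, Sum.inl t => s ∈ σ t
  | Sum.inr s, Sum.inr t => s = t
  | Sum.inl _, Sum.inr _ => False

/-- Let `(S₁, σ, S₀)` be a constellation.  Then the constellation order on `S₁ ⊔ S₀` is a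
partial order making `S₁ ⊔ S₀` a tree (nonempty finite poset with binary sups and
comparability of elements with a common lower bound), and the elements of `S₀` are exactly
its leaves (= minimal elements, having no predecessors). -/

lemma chainMin {α : Type*} [PartialOrder α] [Finite α] (T : Set α) (hne : T.Nonempty)
    (hchain : ∀ a ∈ T, ∀ b ∈ T, a ≤ b ∨ b ≤ a) : ∃ m ∈ T, ∀ x ∈ T, m ≤ x := by
  obtain ⟨m, hm, hmin⟩ := exists_minimal_of_wellFoundedLT (· ∈ T) hne
  exact ⟨m, hm, fun x hx => (hchain m hm x hx).elim id (fun h => hmin hx h)⟩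

lemma existsTop {α : Type*} [PartialOrder α] [Finite α] [Nonempty α]
    (hsup : ∀ a b : α, ∃ c, a ≤ c ∧ b ≤ c ∧ ∀ d, a ≤ d → b ≤ d → c ≤ d) :
    ∃ m : α, ∀ x : α, x ≤ m := by
  have := Fintype.ofFinite α
  have := Classical.decEq α
  have key : ∀ s : Finset α, ∃ m : α, ∀ x ∈ s, x ≤ m := by
    intro s
    induction s using Finset.induction_on with
    | empty => exact ⟨Classical.arbitrary α, by simp⟩
    | insert _ _ _ ih =>
      obtain ⟨m, hm⟩ := ih
      rename_i a s _
      obtain ⟨c, hac, hmc, _⟩ := hsup a m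
      exact ⟨c, by
        intro x hx
        rcases Finset.mem_insert.1 hx with rfl | hx
        · exact hac
        · exact (hm x hx).trans hmc⟩
  obtain ⟨m, hm⟩ := key Finset.univ
  exact ⟨m, fun x => hm x (Finset.mem_univ x)⟩

theorem stmt_10 {α β : Type*} [PartialOrder α] [Finite α] [Nonempty α]
    [PartialOrder β] [Finite β] [Nonempty β]
    (hsupα : ∀ a b : α, ∃ c, a ≤ c ∧ b ≤ c ∧ ∀ d, a ≤ d → b ≤ d → c ≤ d)
    (hcompα : ∀ a b c : α, c ≤ a → c ≤ b → a ≤ b ∨ b ≤ a)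
    (hsupβ : ∀ a b : β, ∃ c, a ≤ c ∧ b ≤ c ∧ ∀ d, a ≤ d → b ≤ d → c ≤ d)
    (hcompβ : ∀ a b c : β, c ≤ a → c ≤ b → a ≤ b ∨ b ≤ a)
    (σ : α → Set β)
    (hconv : ∀ s : α, ConvexSubtree (σ s))
    (hmono : ∀ s s' : α, s ≤ s' → σ s ⊆ σ s')
    (htop : ∀ m : α, (∀ x : α, x ≤ m) → σ m = Set.univ)
    (hcomp : ∀ s s' : α, (σ s ∩ σ s').Nonempty → s ≤ s' ∨ s' ≤ s) :
    (∀ x : α ⊕ β, coOrd σ x x) ∧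
    (∀ x y : α ⊕ β, coOrd σ x y → coOrd σ y x → x = y) ∧
    (∀ x y z : α ⊕ β, coOrd σ x y → coOrd σ y z → coOrd σ x z) ∧
    (∀ x y : α ⊕ β, ∃ z, coOrd σ x z ∧ coOrd σ y z ∧
      ∀ w, coOrd σ x w → coOrd σ y w → coOrd σ z w) ∧
    (∀ x y z : α ⊕ β, coOrd σ z x → coOrd σ z y → coOrd σ x y ∨ coOrd σ y x) ∧
    (∀ x : α ⊕ β, (∀ y, coOrd σ y x → y = x) ↔ ∃ s : β, x = Sum.inr s) := by
  obtain ⟨mtop, hmtop⟩ := existsTop hsupα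
  have hσtop : σ mtop = Set.univ := htop mtop hmtop
  refine ⟨?_, ?_, ?_, ?_, ?_, ?_⟩
  · rintro (a | b)
    · exact le_refl a
    · rfl
  · rintro (a | b) (c | d) h h'
    · exact congrArg _ (le_antisymm h h')
    · exact absurd h id
    · exact absurd h' id
    · exact congrArg _ h
  · rintro (a | b) (c | d) (e | f) h h'
    · exact le_trans h h'
    · exact absurd h' id
    · exact absurd h id
    · exact absurd h id
    · exact hmono c e h' h
    · exact absurd h' id
    · exact h ▸ h'
    · exact h ▸ h'
  · rintro (a | b) (c | d)
    · obtain ⟨e, hae, hce, hmin⟩ := hsupα a c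
      refine ⟨Sum.inl e, hae, hce, ?_⟩
      rintro (w | w) hw hw'
      · exact hmin w hw hw'
      · exact absurd hw id
    · -- sup of inl a and inr d
      set T : Set α := {t | a ≤ t ∧ d ∈ σ t} with hT
      have hne : T.Nonempty := ⟨mtop, hmtop a, by rw [hσtop]; trivial⟩
      obtain ⟨m, ⟨ham, hdm⟩, hmin⟩ := chainMin T hne
        (fun x hx y hy => hcompα x y a hx.1 hy.1)
      refine ⟨Sum.inl m, ham, hdm, ?_⟩
      rintro (w | w) hw hw'
      · exact hmin w ⟨hw, hw'⟩
      · exact absurd hw id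
    · set T : Set α := {t | c ≤ t ∧ b ∈ σ t} with hT
      have hne : T.Nonempty := ⟨mtop, hmtop c, by rw [hσtop]; trivial⟩
      obtain ⟨m, ⟨hcm, hbm⟩, hmin⟩ := chainMin T hne
        (fun x hx y hy => hcompα x y c hx.1 hy.1)
      refine ⟨Sum.inl m, hbm, hcm, ?_⟩
      rintro (w | w) hw hw'
      · exact hmin w ⟨hw', hw⟩
      · exact absurd hw' id
    · by_cases hbd : b = d
      · subst hbd
        exact ⟨Sum.inr b, rfl, rfl, fun w hw _ => hw⟩
      · set T : Set α := {t | b ∈ σ t ∧ d ∈ σ t} with hT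
        have hne : T.Nonempty := ⟨mtop, ⟨by rw [hσtop]; trivial, by rw [hσtop]; trivial⟩⟩
        obtain ⟨m, ⟨hbm, hdm⟩, hmin⟩ := chainMin T hne
          (fun x hx y hy => hcomp x y ⟨b, hx.1, hy.1⟩)
        refine ⟨Sum.inl m, hbm, hdm, ?_⟩
        rintro (w | w) hw hw'
        · exact hmin w ⟨hw, hw'⟩
        · exact absurd (hw.trans hw'.symm) hbd
  · rintro (a | b) (c | d) (e | f) h h'
    · exact hcompα a c e h h'
    · exact hcomp a c ⟨f, h, h'⟩
    · exact h'.elim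
    · exact Or.inr (show d ∈ σ a from h' ▸ h)
    · exact h.elim
    · exact Or.inl (show b ∈ σ c from h ▸ h')
    · exact h.elim
    · exact Or.inl (h.symm.trans h')
  · rintro (a | b)
    · constructor
      · intro h
        obtain ⟨⟨m, hm, -⟩, -⟩ := hconv a
        exact absurd (h (Sum.inr m) hm) (by simp)
      · rintro ⟨s, hs⟩; exact absurd hs (by simp)
    · refine ⟨fun _ => ⟨b, rfl⟩, fun _ => ?_⟩
      rintro (y | y) hy
      · exact absurd hy id
      · exact congrArg _ hy
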